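/- Let B_1 = [[δ_1, 0], [0, 0]] and B_2 = [[b_1, −c b_1], [b_2, −c b_2]] be 2×2 real matrices, so that the eigenvalues of B_2 are 0 and δ_2 = b_1 − c b_2. With the choice b_1 = 100, c = 10, b_2 = 9.99, δ_1 = 0.1, p_{12} = p_{21} = 0.8, the quantity λ = (p_{21}/(p_{21}+p_{12})) log|δ_1| + (p_{12}/(p_{12}+p_{21})) log|b_1 − c b_2| + (p_{12} p_{21}/(p_{12}+p_{21})) log|b_1/(b_1 − c b_2)| is strictly positive, even though |δ_1| < 1 and |δ_2| < 1 (both matrices are individually stable). -/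
import Mathlib


open Real

lemma charpoly_fin_two' (a b c d : ℝ) :
    (Matrix.of ![![a, b], ![c, d]]).charpoly
      = Polynomial.X ^ 2 - Polynomial.C (a + d) * Polynomial.X
        + Polynomial.C (a * d - b * c) := by
  simp [Matrix.charpoly, Matrix.det_fin_two, Matrix.charmatrix_apply]
  ring

/-- With B₁ = [[δ₁,0],[0,0]] and B₂ = [[b₁,−c b₁],[b₂,−c b₂]]
(whose eigenvalues are 0 and δ₂ = b₁ − c b₂), and the numerical choice
b₁ = 100, c = 10, b₂ = 9.99, δ₁ = 0.1, p₁₂ = p₂₁ = 0.8, the Lyapunov exponent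
given by Pincus's formula is strictly positive although |δ₁| < 1 and |δ₂| < 1. -/
theorem stmt11 :
    let δ1 : ℝ := 0.1
    let b1 : ℝ := 100
    let c : ℝ := 10
    let b2 : ℝ := 9.99
    let p12 : ℝ := 0.8
    let p21 : ℝ := 0.8
    let δ2 : ℝ := b1 - c * b2
    let B2 : Matrix (Fin 2) (Fin 2) ℝ := Matrix.of ![![b1, -(c * b1)], ![b2, -(c * b2)]]
    let lam : ℝ := (p21 / (p21 + p12)) * Real.log |δ1|
      + (p12 / (p12 + p21)) * Real.log |b1 - c * b2|
      + (p12 * p21 / (p12 + p21)) * Real.log |b1 / (b1 - c * b2)|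
    -- the eigenvalues of B₂ are 0 and δ₂ (its characteristic polynomial is X² − δ₂ X)
    B2.charpoly = Polynomial.X ^ 2 - Polynomial.C δ2 * Polynomial.X ∧
    -- both regimes are individually stable ...
    |δ1| < 1 ∧ |δ2| < 1 ∧
    -- ... yet the Lyapunov exponent of the mixture is strictly positive
    0 < lam := by
  intro δ1 b1 c b2 p12 p21 δ2 B2 lam
  refine ⟨?_, ?_, ?_, ?_⟩
  · rw [show B2 = Matrix.of ![![b1, -(c * b1)], ![b2, -(c * b2)]] from rfl,
      charpoly_fin_two']
    norm_num [b1, b2, c, δ2]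
  · rw [abs_of_pos (by norm_num : (0:ℝ) < δ1)]; norm_num [δ1]
  · rw [abs_of_pos (by norm_num : (0:ℝ) < δ2)]; norm_num [δ2, b1, c, b2]
  · have h1 : |δ1| = (10:ℝ)⁻¹ := by
      rw [abs_of_pos (by norm_num : (0:ℝ) < δ1)]; norm_num [δ1]
    have h2 : |b1 - c * b2| = (10:ℝ)⁻¹ := by
      rw [abs_of_pos (by norm_num : (0:ℝ) < b1 - c * b2)]; norm_num [b1, c, b2]
    have h3 : |b1 / (b1 - c * b2)| = (10:ℝ) ^ (3:ℕ) := by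
      rw [abs_of_pos (by norm_num : (0:ℝ) < b1 / (b1 - c * b2))]; norm_num [b1, c, b2]
    have hlam : lam = 0.2 * Real.log 10 := by
      show (p21 / (p21 + p12)) * Real.log |δ1|
        + (p12 / (p12 + p21)) * Real.log |b1 - c * b2|
        + (p12 * p21 / (p12 + p21)) * Real.log |b1 / (b1 - c * b2)|
        = 0.2 * Real.log 10
      rw [h1, h2, h3, Real.log_inv, Real.log_pow]
      norm_num [p12, p21]
      ring
    rw [hlam]
    positivity
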